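/- Let Ω be a topological space and let K_1, …, K_m be subsets of Ω such that Ω = K_1 ∪ ⋯ ∪ K_m, each K_i is closed in Ω, and each nonempty K_i is path-connected. Then for any two points x, y ∈ Ω, the following are equivalent: (a) x and y are joined by a path in Ω; (b) there exist indices i_0, i_1, …, i_r with x ∈ K_{i_0}, y ∈ K_{i_r}, and K_{i_s} ∩ K_{i_{s+1}} ≠ ∅ for every 0 ≤ s < r. (This is the topological core of the correctness of the connected component labeling algorithm: labels assigned by propagating through the intersection graph of the cells agree exactly with path components.) -/

import Mathlib

private lemma chain_joined {Ω : Type*} [TopologicalSpace Ω] {m : ℕ} {K : Fin m → Set Ω}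
    (hpc : ∀ i, (K i).Nonempty → IsPathConnected (K i)) :
    ∀ (r : ℕ) (idx : Fin (r + 1) → Fin m) (x y : Ω),
      x ∈ K (idx 0) → y ∈ K (idx (Fin.last r)) →
      (∀ s : Fin r, (K (idx s.castSucc) ∩ K (idx s.succ)).Nonempty) → Joined x y := by
  intro r
  induction r with
  | zero =>
    intro idx x y hx hy _
    have h0 : (Fin.last 0) = (0 : Fin 1) := rfl
    rw [h0] at hy
    exact ((hpc (idx 0) ⟨x, hx⟩).joinedIn x hx y hy).joined
  | succ r ih =>
    intro idx x y hx hy hchain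
    obtain ⟨z, hz0, hz1⟩ := hchain 0
    have hc0 : (0 : Fin (r+1)).castSucc = (0 : Fin (r+2)) := rfl
    rw [hc0] at hz0
    have hxz : Joined x z := ((hpc (idx 0) ⟨x, hx⟩).joinedIn x hx z hz0).joined
    refine hxz.trans (ih (idx ∘ Fin.succ) z y ?_ ?_ ?_)
    · simpa using hz1
    · have : Fin.succ (Fin.last r) = Fin.last (r+1) := Fin.succ_last r
      simpa [this] using hy
    · intro s
      have := hchain s.succ
      simpa using this

theorem labeling_correctness (Ω : Type*) [TopologicalSpace Ω]
    (m : ℕ) (K : Fin m → Set Ω)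
    (hcov : (⋃ i, K i) = Set.univ)
    (hclosed : ∀ i, IsClosed (K i))
    (hpc : ∀ i, (K i).Nonempty → IsPathConnected (K i)) :
    ∀ x y : Ω,
      Joined x y ↔
        ∃ (r : ℕ) (idx : Fin (r + 1) → Fin m),
          x ∈ K (idx 0) ∧ y ∈ K (idx (Fin.last r)) ∧
            ∀ s : Fin r, (K (idx s.castSucc) ∩ K (idx s.succ)).Nonempty := by
  intro x y
  constructor
  · intro hxy
    -- reachable indices
    set R : Set (Fin m) := {j | ∃ (r : ℕ) (idx : Fin (r + 1) → Fin m),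
      x ∈ K (idx 0) ∧ idx (Fin.last r) = j ∧
      ∀ s : Fin r, (K (idx s.castSucc) ∩ K (idx s.succ)).Nonempty} with hR
    set S : Set Ω := ⋃ j ∈ R, K j with hS
    -- extension lemma
    have hext : ∀ j ∈ R, ∀ j', (K j ∩ K j').Nonempty → j' ∈ R := by
      rintro j ⟨r, idx, hx0, hlast, hchain⟩ j' hne
      refine ⟨r + 1, Fin.snoc idx j', ?_, ?_, ?_⟩
      · have h : (Fin.snoc idx j' : Fin (r+2) → Fin m) ((0 : Fin (r+1)).castSucc) = idx 0 :=
          Fin.snoc_castSucc ..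
        have h0 : ((0 : Fin (r+1)).castSucc) = (0 : Fin (r+2)) := rfl
        rw [h0] at h
        rw [h]; exact hx0
      · simp [Fin.snoc_last]
      · intro s
        refine Fin.lastCases ?_ ?_ s
        · have h1 : (Fin.snoc idx j' : Fin (r+2) → Fin m) ((Fin.last r).castSucc) = idx (Fin.last r) :=
            Fin.snoc_castSucc ..
          have h2 : (Fin.last r).succ = Fin.last (r+1) := Fin.succ_last r
          rw [h1, h2, hlast]
          simpa using hne
        · intro i
          have h1 : (Fin.snoc idx j' : Fin (r+2) → Fin m) (i.castSucc.castSucc) = idx i.castSucc :=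
            Fin.snoc_castSucc ..
          have h2 : (Fin.snoc idx j' : Fin (r+2) → Fin m) (i.castSucc.succ) = idx i.succ := by
            rw [Fin.succ_castSucc]; exact Fin.snoc_castSucc ..
          rw [h1, h2]
          exact hchain i
    -- x ∈ S
    obtain ⟨i0, hxi0⟩ : ∃ i, x ∈ K i := by
      have : x ∈ ⋃ i, K i := hcov ▸ Set.mem_univ x
      simpa using this
    have hi0R : i0 ∈ R := ⟨0, fun _ => i0, hxi0, rfl, fun s => s.elim0⟩
    have hxS : x ∈ S := Set.mem_biUnion hi0R hxi0
    -- S is closed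
    have hSclosed : IsClosed S :=
      Set.Finite.isClosed_biUnion (Set.toFinite R) (fun j _ => hclosed j)
    -- complement of S
    have hcompl : Sᶜ = ⋃ j ∈ Rᶜ, K j := by
      ext z
      constructor
      · intro hz
        obtain ⟨j, hzj⟩ : ∃ j, z ∈ K j := by
          have : z ∈ ⋃ i, K i := hcov ▸ Set.mem_univ z
          simpa using this
        refine Set.mem_biUnion (fun hjR => hz ?_) hzj
        exact Set.mem_biUnion hjR hzj
      · intro hz hzS
        obtain ⟨j, hjR, hzj⟩ := Set.mem_iUnion₂.1 hz
        obtain ⟨i, hiR, hzi⟩ := Set.mem_iUnion₂.1 hzS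
        exact hjR (hext i hiR j ⟨z, hzi, hzj⟩)
    have hSopen : IsOpen S := by
      rw [← isClosed_compl_iff, hcompl]
      exact Set.Finite.isClosed_biUnion (Set.toFinite _) (fun j _ => hclosed j)
    -- path from x to y stays in S
    obtain ⟨γ⟩ := hxy
    have hconn : IsPreconnected (Set.range γ) := by
      have := isPreconnected_univ.image γ (γ.continuous.continuousOn)
      rwa [Set.image_univ] at this
    have hyS : y ∈ S := by
      have hsub : Set.range γ ⊆ S :=
        hconn.subset_isClopen ⟨hSclosed, hSopen⟩ ⟨x, ⟨0, by simp⟩, hxS⟩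
      exact hsub ⟨1, by simp⟩
    obtain ⟨j, ⟨r, idx, hx0, hlast, hchain⟩, hyj⟩ := Set.mem_iUnion₂.1 hyS
    exact ⟨r, idx, hx0, hlast ▸ hyj, hchain⟩
  · rintro ⟨r, idx, hx0, hlast, hchain⟩
    exact chain_joined hpc r idx x y hx0 hlast hchain
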